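/- Let Λ = ℤ ⊕ U³ ⊕ ℤ be the Mukai lattice of an abelian surface, and let γ̃ be an isometry of Λ fixing (1,0,−1). Then there exist m ∈ ℤ and α ∈ U³ with (α,α) = 2m(m+1) such that γ̃(1,0,1) = (2m+1, 2α, 2m+1), γ̃(1,0,0) = (m+1, α, m) and γ̃(0,0,1) = (m, α, m+1). Moreover the content of α (the gcd of its coordinates in a basis of U³) is coprime to 2m+1; equivalently, (2m+1, 2α, 2m+1) is primitive in Λ. -/

import Mathlib

open Matrix

/-- The ℝ-bilinear extension of the integral bilinear form with Gram matrix `M`. -/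
def bilinR {ι : Type*} [Fintype ι] (M : Matrix ι ι ℤ) (x y : ι → ℝ) : ℝ :=
  x ⬝ᵥ ((M.map (Int.cast : ℤ → ℝ)) *ᵥ y)

/-- `w` is a tuple of vectors of `L ⊗ ℝ` spanning a maximal positive definite subspace:
its Gram matrix is positive definite and no longer tuple has positive definite Gram matrix. -/
def IsMaxPosTuple {ι : Type*} [Fintype ι] (M : Matrix ι ι ℤ) {k : ℕ}
    (w : Fin k → ι → ℝ) : Prop :=
  (Matrix.of fun i j => bilinR M (w i) (w j)).PosDef ∧
    ∀ w' : Fin (k + 1) → ι → ℝ,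
      ¬ (Matrix.of fun i j => bilinR M (w' i) (w' j)).PosDef

/-- `g` preserves the orientation of the positive cone of the lattice with Gram matrix `M`:
for every basis `w` of a maximal positive definite subspace `W` of `L ⊗ ℝ`, the determinant of
the matrix `(B(wᵢ, g wⱼ))` (which equals, up to the positive factor `det (Gram w)`, the
determinant of the orthogonal projection of `g|_W` back to `W`) is positive. -/
def OrientPres {ι : Type*} [Fintype ι] (M : Matrix ι ι ℤ) (g : Matrix ι ι ℤ) : Prop :=
  ∀ (k : ℕ) (w : Fin k → ι → ℝ), IsMaxPosTuple M w →
    0 < (Matrix.of fun i j : Fin k =>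
          bilinR M (w i) ((g.map (Int.cast : ℤ → ℝ)) *ᵥ w j)).det

/-- `g` is an isometry of the lattice with Gram matrix `M`. -/
def IsIsometry {ι : Type*} [Fintype ι] (M : Matrix ι ι ℤ) (g : Matrix ι ι ℤ) : Prop :=
  gᵀ * M * g = M

/-- A vector of a lattice is primitive if it is divisible only by units. -/
def IsPrimitiveVec {ι : Type*} (l : ι → ℤ) : Prop :=
  ∀ (c : ℤ) (x : ι → ℤ), l = c • x → IsUnit c

/-- The Gram matrix of the Mukai lattice `Λ = ℤ ⊕ U³ ⊕ ℤ` of an abelian surface, in the basis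
`(H⁰-generator, e₁, f₁, e₂, f₂, e₃, f₃, H⁴-generator)`, with Mukai pairing
`((r,α,s),(r',α',s')) = (α,α') - rs' - r's`. -/
def MukaiG : Matrix (Fin 8) (Fin 8) ℤ :=
  !![0,0,0,0,0,0,0,-1;
     0,0,1,0,0,0,0,0;
     0,1,0,0,0,0,0,0;
     0,0,0,0,1,0,0,0;
     0,0,0,1,0,0,0,0;
     0,0,0,0,0,0,1,0;
     0,0,0,0,0,1,0,0;
     -1,0,0,0,0,0,0,0]

/-- The Gram matrix of `U³` in the basis `e₁, f₁, e₂, f₂, e₃, f₃`. -/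
def U3G : Matrix (Fin 6) (Fin 6) ℤ :=
  !![0,1,0,0,0,0;
     1,0,0,0,0,0;
     0,0,0,1,0,0;
     0,0,1,0,0,0;
     0,0,0,0,0,1;
     0,0,0,0,1,0]

/-- The Mukai vector `(r, α, s) ∈ ℤ ⊕ U³ ⊕ ℤ`. -/
def mk (r : ℤ) (α : Fin 6 → ℤ) (s : ℤ) : Fin 8 → ℤ :=
  ![r, α 0, α 1, α 2, α 3, α 4, α 5, s]

lemma pair_pres {n : Type*} [Fintype n] (G M : Matrix n n ℤ) (h : Gᵀ * M * G = M)
    (x y : n → ℤ) : (G *ᵥ x) ⬝ᵥ (M *ᵥ (G *ᵥ y)) = x ⬝ᵥ (M *ᵥ y) := by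
  rw [Matrix.mulVec_mulVec, Matrix.dotProduct_mulVec, ← Matrix.vecMul_transpose,
    Matrix.vecMul_vecMul, ← Matrix.mul_assoc, h, ← Matrix.dotProduct_mulVec]

lemma fs3 : (Fin.succ 2 : Fin 8) = 3 := rfl
lemma fs4 : ((Fin.succ 2).succ : Fin 8) = 4 := rfl
lemma fs5 : ((Fin.succ 2).succ.succ : Fin 8) = 5 := rfl
lemma fs6 : ((Fin.succ 2).succ.succ.succ : Fin 8) = 6 := rfl
lemma fs7 : ((Fin.succ 2).succ.succ.succ.succ : Fin 8) = 7 := rfl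
lemma gs3 : (Fin.succ 2 : Fin 6) = 3 := rfl
lemma gs4 : ((Fin.succ 2).succ : Fin 6) = 4 := rfl
lemma gs5 : ((Fin.succ 2).succ.succ : Fin 6) = 5 := rfl

lemma mukai_pair (v w : Fin 8 → ℤ) : v ⬝ᵥ (MukaiG *ᵥ w) =
    v 1 * w 2 + v 2 * w 1 + v 3 * w 4 + v 4 * w 3 + v 5 * w 6 + v 6 * w 5
      - v 0 * w 7 - v 7 * w 0 := by
  simp [MukaiG, Matrix.mulVec, dotProduct, Fin.sum_univ_succ, fs3, fs4, fs5, fs6, fs7]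
  ring

lemma u3_pair (α : Fin 6 → ℤ) : α ⬝ᵥ (U3G *ᵥ α) =
    2 * (α 0 * α 1 + α 2 * α 3 + α 4 * α 5) := by
  simp [U3G, Matrix.mulVec, dotProduct, Fin.sum_univ_succ, gs3, gs4, gs5]
  ring

lemma mk_0 (r : ℤ) (α : Fin 6 → ℤ) (s : ℤ) : mk r α s 0 = r := rfl
lemma mk_1 (r : ℤ) (α : Fin 6 → ℤ) (s : ℤ) : mk r α s 1 = α 0 := rfl
lemma mk_2 (r : ℤ) (α : Fin 6 → ℤ) (s : ℤ) : mk r α s 2 = α 1 := rfl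
lemma mk_3 (r : ℤ) (α : Fin 6 → ℤ) (s : ℤ) : mk r α s 3 = α 2 := rfl
lemma mk_4 (r : ℤ) (α : Fin 6 → ℤ) (s : ℤ) : mk r α s 4 = α 3 := rfl
lemma mk_5 (r : ℤ) (α : Fin 6 → ℤ) (s : ℤ) : mk r α s 5 = α 4 := rfl
lemma mk_6 (r : ℤ) (α : Fin 6 → ℤ) (s : ℤ) : mk r α s 6 = α 5 := rfl
lemma mk_7 (r : ℤ) (α : Fin 6 → ℤ) (s : ℤ) : mk r α s 7 = s := rfl

lemma vec8_ext {v w : Fin 8 → ℤ} (h0 : v 0 = w 0) (h1 : v 1 = w 1) (h2 : v 2 = w 2)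
    (h3 : v 3 = w 3) (h4 : v 4 = w 4) (h5 : v 5 = w 5) (h6 : v 6 = w 6) (h7 : v 7 = w 7) :
    v = w := by
  funext j; fin_cases j <;> assumption

/-- Any isometry `γ̃` of the Mukai lattice `Λ = ℤ ⊕ U³ ⊕ ℤ` fixing `(1,0,-1)` satisfies
`γ̃(1,0,1) = (2m+1, 2α, 2m+1)`, `γ̃(1,0,0) = (m+1, α, m)` and `γ̃(0,0,1) = (m, α, m+1)` for
some `m ∈ ℤ` and `α ∈ U³` with `(α,α) = 2m(m+1)`; moreover the content of `α` is coprime to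
`2m+1`, equivalently `(2m+1, 2α, 2m+1)` is primitive in `Λ`. -/
theorem stmt_9 (G : Matrix (Fin 8) (Fin 8) ℤ)
    (hiso : IsIsometry MukaiG G) (hunit : IsUnit G.det)
    (hfix : G *ᵥ mk 1 0 (-1) = mk 1 0 (-1)) :
    ∃ (m : ℤ) (α : Fin 6 → ℤ),
      α ⬝ᵥ (U3G *ᵥ α) = 2 * m * (m + 1) ∧
      G *ᵥ mk 1 0 1 = mk (2 * m + 1) ((2 : ℤ) • α) (2 * m + 1) ∧
      G *ᵥ mk 1 0 0 = mk (m + 1) α m ∧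
      G *ᵥ mk 0 0 1 = mk m α (m + 1) ∧
      IsCoprime (Finset.univ.gcd α) (2 * m + 1) ∧
      IsPrimitiveVec (mk (2 * m + 1) ((2 : ℤ) • α) (2 * m + 1)) := by
  obtain ⟨v, hv⟩ : ∃ v, G *ᵥ mk 1 0 0 = v := ⟨_, rfl⟩
  -- pairing with the fixed vector
  have hp1 : v 0 - v 7 = 1 := by
    have h := pair_pres G MukaiG hiso (mk 1 0 0) (mk 1 0 (-1))
    rw [hfix, hv, mukai_pair, mukai_pair] at h
    simp only [mk_0, mk_1, mk_2, mk_3, mk_4, mk_5, mk_6, mk_7, Pi.zero_apply] at h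
    linarith
  -- self pairing
  have hp2 : v 1 * v 2 + v 3 * v 4 + v 5 * v 6 = v 0 * v 7 := by
    have h := pair_pres G MukaiG hiso (mk 1 0 0) (mk 1 0 0)
    rw [hv, mukai_pair, mukai_pair] at h
    simp only [mk_0, mk_1, mk_2, mk_3, mk_4, mk_5, mk_6, mk_7, Pi.zero_apply] at h
    linarith
  set m : ℤ := v 7 with hm
  set α : Fin 6 → ℤ := ![v 1, v 2, v 3, v 4, v 5, v 6] with hα
  have ha0 : α 0 = v 1 := rfl
  have ha1 : α 1 = v 2 := rfl
  have ha2 : α 2 = v 3 := rfl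
  have ha3 : α 3 = v 4 := rfl
  have ha4 : α 4 = v 5 := rfl
  have ha5 : α 5 = v 6 := rfl
  have h01 : v 0 = m + 1 := by omega
  have hv100 : G *ᵥ mk 1 0 0 = mk (m + 1) α m := by
    rw [hv]
    exact vec8_ext (by rw [mk_0]; exact h01) (by rw [mk_1, ha0]) (by rw [mk_2, ha1])
      (by rw [mk_3, ha2]) (by rw [mk_4, ha3]) (by rw [mk_5, ha4]) (by rw [mk_6, ha5])
      (by rw [mk_7])
  have hsub : mk 0 0 1 = mk 1 0 0 - mk 1 0 (-1) := by
    apply vec8_ext <;>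
      simp only [Pi.sub_apply, mk_0, mk_1, mk_2, mk_3, mk_4, mk_5, mk_6, mk_7,
        Pi.zero_apply] <;> ring
  have hv001 : G *ᵥ mk 0 0 1 = mk m α (m + 1) := by
    rw [hsub, Matrix.mulVec_sub, hfix, hv100]
    apply vec8_ext <;>
      simp only [Pi.sub_apply, mk_0, mk_1, mk_2, mk_3, mk_4, mk_5, mk_6, mk_7,
        Pi.zero_apply] <;> ring
  have hadd : mk 1 0 1 = mk 1 0 0 + mk 0 0 1 := by
    apply vec8_ext <;>
      simp only [Pi.add_apply, mk_0, mk_1, mk_2, mk_3, mk_4, mk_5, mk_6, mk_7,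
        Pi.zero_apply] <;> ring
  have hv101 : G *ᵥ mk 1 0 1 = mk (2 * m + 1) ((2 : ℤ) • α) (2 * m + 1) := by
    rw [hadd, Matrix.mulVec_add, hv100, hv001]
    apply vec8_ext <;>
      simp only [Pi.add_apply, Pi.smul_apply, smul_eq_mul, mk_0, mk_1, mk_2, mk_3, mk_4,
        mk_5, mk_6, mk_7] <;> ring
  -- quadratic relation
  have hquad : α ⬝ᵥ (U3G *ᵥ α) = 2 * m * (m + 1) := by
    rw [u3_pair, ha0, ha1, ha2, ha3, ha4, ha5]
    rw [h01] at hp2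
    linarith
  -- inverse of G
  have hGinv : ∀ x : Fin 8 → ℤ, G⁻¹ *ᵥ (G *ᵥ x) = x := by
    intro x
    rw [Matrix.mulVec_mulVec, Matrix.nonsing_inv_mul G hunit, Matrix.one_mulVec]
  -- primitivity
  have hprim : IsPrimitiveVec (mk (2 * m + 1) ((2 : ℤ) • α) (2 * m + 1)) := by
    intro c x hcx
    have h1 : mk 1 0 1 = c • (G⁻¹ *ᵥ x) := by
      rw [← Matrix.mulVec_smul, ← hcx, ← hv101, hGinv]
    have h2 : (1 : ℤ) = c * (G⁻¹ *ᵥ x) 0 := by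
      have h3 := congrFun h1 0
      rwa [mk_0, Pi.smul_apply, smul_eq_mul] at h3
    exact IsUnit.of_mul_eq_one (a := c) _ h2.symm
  -- coprimality
  have hcop : IsCoprime (Finset.univ.gcd α) (2 * m + 1) := by
    rw [Int.isCoprime_iff_gcd_eq_one]
    set d : ℕ := Int.gcd (Finset.univ.gcd α) (2 * m + 1) with hd
    have hdg : (d : ℤ) ∣ Finset.univ.gcd α := Int.gcd_dvd_left _ _
    have hdm : (d : ℤ) ∣ 2 * m + 1 := Int.gcd_dvd_right _ _
    have hdα : ∀ i : Fin 6, (d : ℤ) ∣ 2 * α i := fun i =>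
      Dvd.dvd.mul_left (hdg.trans (Finset.gcd_dvd (Finset.mem_univ i))) 2
    have hfac : mk (2 * m + 1) ((2 : ℤ) • α) (2 * m + 1) =
        (d : ℤ) • mk ((2 * m + 1) / (d : ℤ)) (fun i => 2 * α i / (d : ℤ))
          ((2 * m + 1) / (d : ℤ)) := by
      apply vec8_ext <;>
        simp only [Pi.smul_apply, smul_eq_mul, mk_0, mk_1, mk_2, mk_3, mk_4, mk_5,
          mk_6, mk_7] <;>
        first
          | exact (Int.mul_ediv_cancel' hdm).symm
          | exact (Int.mul_ediv_cancel' (hdα _)).symm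
    have hu : IsUnit ((d : ℤ)) := hprim _ _ hfac
    rcases Int.isUnit_iff.mp hu with h | h
    · exact_mod_cast h
    · omega
  exact ⟨m, α, hquad, hv101, hv100, hv001, hcop, hprim⟩
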